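/- Let p be a prime number and let c be a real number with 0 < c < p. Then the Euclidean minimum of ℤ with respect to the weighted norm f_{p,c} is infinite: for every real number κ there exist a, b ∈ ℤ with b ≠ 0 such that f_{p,c}(a − bq) ≥ κ · f_{p,c}(b) for every q ∈ ℤ. In particular, f_{p,c} is not a Euclidean function on ℤ. -/

import Mathlib

open scoped Classical

/-- The weighted norm `f_{p,c}` on `ℚ`:  `f_{p,c}(x) = |x| · (c/p)^{v_p(x)}` for `x ≠ 0`,
and `f_{p,c}(0) = 0`, where `v_p` is the `p`-adic valuation. -/
noncomputable def fpc (p : ℕ) (c : ℝ) (x : ℚ) : ℝ :=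
  if x = 0 then 0 else |(x : ℝ)| * (c / p) ^ (padicValRat p x)

/-- For a prime `p` and `0 < c < p`, the Euclidean minimum of `ℤ` with respect to
`f_{p,c}` is infinite, and in particular `f_{p,c}` is not a Euclidean function on `ℤ`. -/
theorem fpc_not_euclidean_of_lt (p : ℕ) (hp : p.Prime) (c : ℝ) (hc : 0 < c) (hcp : c < p) :
    (∀ κ : ℝ, ∃ a b : ℤ, b ≠ 0 ∧ ∀ q : ℤ, κ * fpc p c (b : ℚ) ≤ fpc p c ((a : ℚ) - b * q)) ∧
    ¬ (∀ a b : ℤ, b ≠ 0 → ∃ q : ℤ, fpc p c ((a : ℚ) - b * q) < fpc p c (b : ℚ)) := by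
  have hp2 : 2 ≤ p := hp.two_le
  have hpR : (0:ℝ) < p := by exact_mod_cast (show 0 < p by omega)
  haveI : Fact p.Prime := ⟨hp⟩
  have key : ∀ κ : ℝ, ∃ a b : ℤ, b ≠ 0 ∧
      ∀ q : ℤ, κ * fpc p c (b : ℚ) ≤ fpc p c ((a : ℚ) - b * q) := by
    intro κ
    have h1 : (1:ℝ) < p / c := (one_lt_div hc).2 hcp
    obtain ⟨n₀, hn₀⟩ := pow_unbounded_of_one_lt (4 * κ) h1
    set n := n₀ + 2 with hn_def
    have hn : 4 * κ < ((p:ℝ) / c) ^ n :=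
      lt_of_lt_of_le hn₀ (pow_le_pow_right₀ h1.le (by omega))
    set m : ℕ := p ^ n / 2 with hm_def
    set a : ℕ := if p ∣ m then m + 1 else m with ha_def
    have hpa : ¬ p ∣ a := by
      by_cases h : p ∣ m
      · simp only [ha_def, if_pos h]
        intro h'
        have : p ∣ 1 := (Nat.dvd_add_right h).mp h'
        have := Nat.dvd_one.mp this
        omega
      · simpa [ha_def, if_neg h] using h
    -- basic size facts
    have hN4 : (4:ℕ) ≤ p ^ n := by
      calc (4:ℕ) = 2 ^ 2 := rfl
      _ ≤ p ^ 2 := Nat.pow_le_pow_left hp2 2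
      _ ≤ p ^ n := Nat.pow_le_pow_right (by omega) (by omega)
    have hm2 : 2 * m ≤ p ^ n := Nat.mul_div_le (p ^ n) 2 |>.trans_eq (by ring_nf)
    have hm2' : p ^ n ≤ 2 * m + 1 := by omega
    have ham : m ≤ a ∧ a ≤ m + 1 := by
      by_cases h : p ∣ m <;> simp [ha_def, h]
    refine ⟨(a : ℤ), (p : ℤ) ^ n, by positivity, ?_⟩
    intro q
    -- the remainder x is a nonzero integer not divisible by p
    set x : ℤ := (a : ℤ) - (p:ℤ) ^ n * q with hx_def
    have hpx : ¬ (p:ℤ) ∣ x := by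
      intro h
      have hd : (p:ℤ) ∣ (p:ℤ) ^ n * q := dvd_mul_of_dvd_left (dvd_pow_self _ (by omega)) q
      have : (p:ℤ) ∣ (a:ℤ) := by
        have := dvd_add h hd
        simpa [hx_def] using this
      exact hpa (Int.ofNat_dvd.mp this)
    have hx0 : x ≠ 0 := fun h => hpx (h ▸ dvd_zero _)
    -- value at b
    have hb_val : fpc p c (((p:ℤ) ^ n : ℤ) : ℚ) = c ^ n := by
      have hne : ((p:ℚ)) ^ n ≠ 0 := by positivity
      have hv : padicValRat p ((p:ℚ) ^ n) = n := by
        rw [padicValRat.pow,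
          padicValRat.self hp.one_lt, mul_one]
      rw [show (((p:ℤ) ^ n : ℤ) : ℚ) = (p:ℚ) ^ n by push_cast; ring]
      rw [fpc, if_neg hne, hv, zpow_natCast]
      have h2 : |(((p:ℚ) ^ n : ℚ) : ℝ)| = (p:ℝ) ^ n := by
        push_cast
        rw [abs_of_pos (by positivity)]
      rw [h2, ← mul_pow]
      have h3 : (p:ℝ) * (c / p) = c := by field_simp
      rw [h3]
    -- value at x
    have hx_val : fpc p c (x : ℚ) = |(x : ℝ)| := by
      have hxQ : (x : ℚ) ≠ 0 := by exact_mod_cast hx0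
      have hv : padicValRat p (x : ℚ) = 0 := by
        rw [padicValRat.of_int, padicValInt.eq_zero_of_not_dvd hpx, Nat.cast_zero]
      rw [fpc, if_neg hxQ, hv, zpow_zero, mul_one]
      norm_cast
    -- size of x
    have hxR : ((p:ℝ) ^ n) / 4 ≤ |(x : ℝ)| := by
      have hNm : ((p:ℝ) ^ n) ≤ 2 * m + 1 := by exact_mod_cast hm2'
      have hmN : 2 * (m:ℝ) ≤ (p:ℝ) ^ n := by exact_mod_cast hm2
      have hN4R : (4:ℝ) ≤ (p:ℝ) ^ n := by exact_mod_cast hN4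
      have haR : (m:ℝ) ≤ (a:ℝ) ∧ (a:ℝ) ≤ (m:ℝ) + 1 := by
        exact ⟨by exact_mod_cast ham.1, by exact_mod_cast ham.2⟩
      have hxR_eq : (x:ℝ) = (a:ℝ) - (p:ℝ) ^ n * (q:ℝ) := by
        rw [hx_def]; push_cast; ring
      rcases le_or_gt (q:ℝ) 0 with hq | hq
      · have : (p:ℝ) ^ n * (q:ℝ) ≤ 0 := mul_nonpos_of_nonneg_of_nonpos (by positivity) hq
        have h1 : (p:ℝ) ^ n / 4 ≤ (x:ℝ) := by
          rw [hxR_eq]; nlinarith [haR.1]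
        calc (p:ℝ) ^ n / 4 ≤ (x:ℝ) := h1
        _ ≤ |(x:ℝ)| := le_abs_self _
      · have hq1 : (1:ℝ) ≤ (q:ℝ) := by exact_mod_cast hq
        have h1 : (p:ℝ) ^ n / 4 ≤ -(x:ℝ) := by
          rw [hxR_eq]
          have : (p:ℝ) ^ n ≤ (p:ℝ) ^ n * (q:ℝ) := le_mul_of_one_le_right (by positivity) hq1
          nlinarith [haR.2]
        calc (p:ℝ) ^ n / 4 ≤ -(x:ℝ) := h1
        _ ≤ |(x:ℝ)| := neg_le_abs _
    -- conclude
    have hgoal : κ * c ^ n ≤ (p:ℝ) ^ n / 4 := by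
      rcases le_or_gt κ 0 with hκ | hκ
      · have : κ * c ^ n ≤ 0 := mul_nonpos_of_nonpos_of_nonneg hκ (by positivity)
        linarith [show (0:ℝ) ≤ (p:ℝ)^n / 4 by positivity]
      · have hpc : ((p:ℝ)/c) ^ n * c ^ n = (p:ℝ) ^ n := by
          rw [← mul_pow, div_mul_cancel₀ _ hc.ne']
        have hcn : (0:ℝ) < c ^ n := by positivity
        nlinarith
    have : κ * fpc p c (((p:ℤ) ^ n : ℤ) : ℚ) ≤ fpc p c (x : ℚ) := by
      rw [hb_val, hx_val]; linarith
    have hcast : ((a:ℤ):ℚ) - ((p:ℤ)^n : ℤ) * (q:ℚ) = (x : ℚ) := by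
      rw [hx_def]; push_cast; ring
    calc κ * fpc p c (((p:ℤ) ^ n : ℤ) : ℚ) ≤ fpc p c (x : ℚ) := this
    _ = fpc p c (((a:ℤ):ℚ) - ((p:ℤ)^n : ℤ) * (q:ℚ)) := by rw [hcast]
  refine ⟨key, ?_⟩
  intro H
  obtain ⟨a, b, hb, h⟩ := key 1
  obtain ⟨q, hq⟩ := H a b hb
  have := h q
  rw [one_mul] at this
  linarith
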